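/- Let P be a finite lattice and let J_P ⊆ P be the sublattice consisting of all joins of atoms of P (including the empty join, which equals 0̂). If the top element 1̂ of P does not lie in J_P, then the based space Δ̌̂(P) is contractible. If 1̂ ∈ J_P, then Δ̌̂(P) is homotopy equivalent to Δ̌̂(J_P). -/

import Mathlib

set_option linter.unusedSectionVars false
set_option linter.unusedVariables false
set_option maxHeartbeats 1000000


open Finset

attribute [local instance] Classical.propDecidable

/-- Geometric order complex `Δ(P)` of a finite poset. -/
def OC (P : Type) [PartialOrder P] [Fintype P] : Type :=
  {f : P → ℝ // (∀ x, 0 ≤ f x) ∧ (∑ x, f x) = 1 ∧ IsChain (· ≤ ·) {x | f x ≠ 0}}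

instance (P : Type) [PartialOrder P] [Fintype P] : TopologicalSpace (OC P) :=
  inferInstanceAs (TopologicalSpace {f : P → ℝ // _})

/-- Relation collapsing `A ⊆ X` to a freely added basepoint; models `X/A`. -/
def pcollapseRel (X : Type) (A : Set X) : (X ⊕ Unit) → (X ⊕ Unit) → Prop :=
  fun a b => ∃ x ∈ A, a = Sum.inl x ∧ b = Sum.inr ()

/-- The quotient space `X/A`. -/
def PCollapse (X : Type) [TopologicalSpace X] (A : Set X) : Type :=
  Quot (pcollapseRel X A)

instance (X : Type) [TopologicalSpace X] (A : Set X) : TopologicalSpace (PCollapse X A) :=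
  inferInstanceAs (TopologicalSpace (Quot _))

/-- `Δ̌̂(P)`: collapse in `Δ(P)` all simplices not containing both `b` and `t`. -/
def Dhat (P : Type) [PartialOrder P] [Fintype P] (b t : P) : Type :=
  PCollapse (OC P) {f : OC P | f.1 b = 0 ∨ f.1 t = 0}

instance (P : Type) [PartialOrder P] [Fintype P] (b t : P) :
    TopologicalSpace (Dhat P b t) :=
  inferInstanceAs (TopologicalSpace (PCollapse _ _))

/-- The sublattice of all joins of atoms of a finite lattice (including the empty
join, which equals `⊥`). -/
def joinsOfAtoms (P : Type) [Lattice P] [Fintype P] [BoundedOrder P] : Set P :=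
  {x | ∃ s : Finset P, (∀ a ∈ s, IsAtom a) ∧ x = s.sup id}

section Aux

variable {P Q R : Type} [PartialOrder P] [Fintype P] [PartialOrder Q] [Fintype Q]
  [PartialOrder R] [Fintype R]

/-- Pushforward of a weight function along a map of posets. -/
noncomputable def pushf (φ : P → Q) (f : P → ℝ) : Q → ℝ :=
  fun q => ∑ x, if φ x = q then f x else 0

lemma pushf_nonneg {φ : P → Q} {f : P → ℝ} (hf : ∀ x, 0 ≤ f x) (q : Q) :
    0 ≤ pushf φ f q :=
  Finset.sum_nonneg fun x _ => by
    split
    · exact hf x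
    · exact le_refl 0

lemma pushf_sum {φ : P → Q} {f : P → ℝ} : (∑ q, pushf φ f q) = ∑ x, f x := by
  unfold pushf
  rw [Finset.sum_comm]
  refine Finset.sum_congr rfl fun x _ => ?_
  simp [Finset.sum_ite_eq]

lemma pushf_ne_zero {φ : P → Q} {f : P → ℝ} {q : Q} (h : pushf φ f q ≠ 0) :
    ∃ x, φ x = q ∧ f x ≠ 0 := by
  by_contra hc
  push_neg at hc
  apply h
  unfold pushf
  refine Finset.sum_eq_zero fun x _ => ?_
  split
  · next he => exact hc x he
  · rfl

lemma pushf_eq_single {φ : P → Q} {f : P → ℝ} {q : Q} {p : P}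
    (h : ∀ x, φ x = q ↔ x = p) : pushf φ f q = f p := by
  unfold pushf
  have : ∀ x ∈ Finset.univ, (if φ x = q then f x else 0) = (if x = p then f x else 0) :=
    fun x _ => if_congr (h x) rfl rfl
  rw [Finset.sum_congr rfl this]
  simp [Finset.sum_ite_eq']

lemma pushf_eq_zero {φ : P → Q} {f : P → ℝ} {q : Q} (h : ∀ x, φ x ≠ q) :
    pushf φ f q = 0 := by
  unfold pushf
  refine Finset.sum_eq_zero fun x _ => ?_
  simp [h x]

lemma pushf_comp {φ : Q → R} {ψ : P → Q} {f : P → ℝ} :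
    pushf φ (pushf ψ f) = pushf (φ ∘ ψ) f := by
  funext r
  unfold pushf
  have h1 : ∀ q ∈ (univ : Finset Q),
      (if φ q = r then (∑ x, if ψ x = q then f x else 0) else 0)
        = ∑ x, if ψ x = q then (if φ q = r then f x else 0) else 0 := by
    intro q _
    by_cases h : φ q = r
    · simp only [h, if_true]
    · rw [if_neg h]
      exact (Finset.sum_eq_zero fun x _ => by rw [if_neg h, ite_self]).symm
  rw [Finset.sum_congr rfl h1, Finset.sum_comm]
  refine Finset.sum_congr rfl fun x _ => ?_
  rw [Finset.sum_ite_eq]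
  simp

/-- Pushforward as a map of order complexes. -/
noncomputable def pushOC (φ : P → Q) (hφ : Monotone φ) (f : OC P) : OC Q := by
  refine ⟨pushf φ f.1, pushf_nonneg f.2.1, ?_, ?_⟩
  · rw [pushf_sum, f.2.2.1]
  · intro q1 h1 q2 h2 hne
    obtain ⟨x1, hx1, hfx1⟩ := pushf_ne_zero h1
    obtain ⟨x2, hx2, hfx2⟩ := pushf_ne_zero h2
    have hxne : x1 ≠ x2 := fun he => hne (hx1 ▸ hx2 ▸ he ▸ rfl)
    rcases f.2.2.2 hfx1 hfx2 hxne with hle | hle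
    · exact Or.inl (hx1 ▸ hx2 ▸ hφ hle)
    · exact Or.inr (hx2 ▸ hx1 ▸ hφ hle)

lemma pushOC_val (φ : P → Q) (hφ : Monotone φ) (f : OC P) :
    (pushOC φ hφ f).1 = pushf φ f.1 := rfl

lemma continuous_pushOC (φ : P → Q) (hφ : Monotone φ) : Continuous (pushOC φ hφ) := by
  refine Continuous.subtype_mk (continuous_pi fun q => ?_) _
  refine continuous_finset_sum _ fun x _ => ?_
  by_cases h : φ x = q
  · simp only [h, if_true]
    exact (continuous_apply x).comp continuous_subtype_val
  · simp only [h, if_false]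
    exact continuous_const

lemma pushOC_congr {φ ψ : P → Q} (h : φ = ψ) (hφ : Monotone φ) (hψ : Monotone ψ) :
    pushOC φ hφ = pushOC ψ hψ := by
  subst h
  rfl

lemma pushOC_id : pushOC (id : P → P) monotone_id = id := by
  funext f
  refine Subtype.ext ?_
  funext q
  exact pushf_eq_single fun x => Iff.rfl

lemma pushOC_comp (φ : Q → R) (hφ : Monotone φ) (ψ : P → Q) (hψ : Monotone ψ) (f : OC P) :
    pushOC φ hφ (pushOC ψ hψ f) = pushOC (φ ∘ ψ) (hφ.comp hψ) f :=
  Subtype.ext pushf_comp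

/-- Tail weight: total mass strictly above (or incomparable to) `x`. -/
noncomputable def tailw (f : P → ℝ) (x : P) : ℝ := ∑ y, if y ≤ x then 0 else f y

lemma tailw_nonneg {f : P → ℝ} (hf : ∀ y, 0 ≤ f y) (x : P) : 0 ≤ tailw f x :=
  Finset.sum_nonneg fun y _ => by
    split
    · exact le_refl 0
    · exact hf y

lemma tailw_add_le_one {f : P → ℝ} (hf : ∀ y, 0 ≤ f y) (hsum : (∑ y, f y) = 1) (x : P) :
    tailw f x + f x ≤ 1 := by
  have h1 : tailw f x + f x
      = ∑ y, ((if y ≤ x then 0 else f y) + (if y = x then f y else 0)) := by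
    rw [Finset.sum_add_distrib]
    congr 1
    simp [Finset.sum_ite_eq']
  rw [h1, ← hsum]
  refine Finset.sum_le_sum fun y _ => ?_
  by_cases hyx : y = x
  · subst hyx
    simp
  · rw [if_neg hyx, add_zero]
    split
    · exact hf y
    · exact le_refl _

lemma tailw_add_le_tailw {f : P → ℝ} (hf : ∀ y, 0 ≤ f y) {y x : P} (hyx : y < x) :
    tailw f x + f x ≤ tailw f y := by
  have h1 : tailw f x + f x
      = ∑ z, ((if z ≤ x then 0 else f z) + (if z = x then f z else 0)) := by
    rw [Finset.sum_add_distrib]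
    congr 1
    simp [Finset.sum_ite_eq']
  rw [h1]
  refine Finset.sum_le_sum fun z _ => ?_
  by_cases hz : z = x
  · subst hz
    rw [if_pos le_rfl, if_pos rfl, zero_add,
        if_neg (fun h : z ≤ y => absurd (lt_of_le_of_lt h hyx) (lt_irrefl z))]
  · rw [if_neg hz, add_zero]
    by_cases h2 : z ≤ y
    · rw [if_pos (h2.trans hyx.le), if_pos h2]
    · rw [if_neg h2]
      split
      · exact hf z
      · exact le_refl _

/-- The amount of mass already moved to the target map at time `t`. -/
noncomputable def vW (t : ℝ) (f : P → ℝ) (x : P) : ℝ :=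
  min (f x) (max 0 (t - tailw f x))

lemma vW_nonneg {t : ℝ} {f : P → ℝ} (hf : ∀ y, 0 ≤ f y) (x : P) : 0 ≤ vW t f x :=
  le_min (hf x) (le_max_left _ _)

lemma vW_le {t : ℝ} {f : P → ℝ} (x : P) : vW t f x ≤ f x := min_le_left _ _

lemma vW_ne_zero {t : ℝ} {f : P → ℝ} (hf : ∀ y, 0 ≤ f y) {x : P} (h : vW t f x ≠ 0) :
    f x ≠ 0 ∧ tailw f x < t := by
  have h0 : 0 < vW t f x := lt_of_le_of_ne (vW_nonneg hf x) (Ne.symm h)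
  constructor
  · exact fun he => absurd (lt_of_lt_of_le h0 (he ▸ vW_le x)) (lt_irrefl 0)
  · have h2 : 0 < max 0 (t - tailw f x) := lt_of_lt_of_le h0 (min_le_right _ _)
    by_contra hc
    push_neg at hc
    rw [max_eq_left (by linarith)] at h2
    exact lt_irrefl 0 h2

lemma uW_ne_zero {t : ℝ} {f : P → ℝ} (hf : ∀ y, 0 ≤ f y) {x : P}
    (h : f x - vW t f x ≠ 0) : f x ≠ 0 ∧ t < tailw f x + f x := by
  have hlt : vW t f x < f x := lt_of_le_of_ne (vW_le x) (fun he => h (by rw [he, sub_self]))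
  have hfx : 0 < f x := lt_of_le_of_lt (vW_nonneg hf x) hlt
  constructor
  · exact ne_of_gt hfx
  · have h2 : max 0 (t - tailw f x) < f x := by
      rcases min_lt_iff.mp hlt with h' | h'
      · exact absurd h' (lt_irrefl _)
      · exact h'
    have h3 : t - tailw f x ≤ max 0 (t - tailw f x) := le_max_right _ _
    linarith

lemma vW_zero {f : P → ℝ} (hf : ∀ y, 0 ≤ f y) (x : P) : vW 0 f x = 0 := by
  unfold vW
  rw [max_eq_left (by linarith [tailw_nonneg hf x]), min_eq_right (hf x)]

lemma vW_one {f : P → ℝ} (hf : ∀ y, 0 ≤ f y) (hsum : (∑ y, f y) = 1) (x : P) :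
    vW 1 f x = f x := by
  unfold vW
  have h1 : f x ≤ 1 - tailw f x := by linarith [tailw_add_le_one hf hsum x]
  rw [max_eq_right (by linarith [hf x]), min_eq_left h1]

/-- Core of the prism homotopy between two comparable monotone maps. -/
noncomputable def hcore (φ ψ : P → Q) (t : ℝ) (f : P → ℝ) : Q → ℝ := fun q =>
  (∑ x, if φ x = q then f x - vW t f x else 0) + (∑ x, if ψ x = q then vW t f x else 0)

lemma hcore_sum {φ ψ : P → Q} {t : ℝ} {f : P → ℝ} :
    (∑ q, hcore φ ψ t f q) = ∑ x, f x := by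
  unfold hcore
  rw [Finset.sum_add_distrib]
  have h1 : (∑ q, ∑ x, if φ x = q then f x - vW t f x else 0) = ∑ x, (f x - vW t f x) := by
    rw [Finset.sum_comm]
    exact Finset.sum_congr rfl fun x _ => by simp [Finset.sum_ite_eq]
  have h2 : (∑ q, ∑ x, if ψ x = q then vW t f x else 0) = ∑ x, vW t f x := by
    rw [Finset.sum_comm]
    exact Finset.sum_congr rfl fun x _ => by simp [Finset.sum_ite_eq]
  rw [h1, h2, ← Finset.sum_add_distrib]
  exact Finset.sum_congr rfl fun x _ => by ring

lemma hcore_nonneg {φ ψ : P → Q} {t : ℝ} {f : P → ℝ} (hf : ∀ y, 0 ≤ f y) (q : Q) :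
    0 ≤ hcore φ ψ t f q := by
  refine add_nonneg (Finset.sum_nonneg fun x _ => ?_) (Finset.sum_nonneg fun x _ => ?_)
  · split
    · linarith [vW_le (t := t) (f := f) x]
    · exact le_refl 0
  · split
    · exact vW_nonneg hf x
    · exact le_refl 0

lemma hcore_supp {φ ψ : P → Q} {t : ℝ} {f : P → ℝ} {q : Q} (h : hcore φ ψ t f q ≠ 0) :
    (∃ x, φ x = q ∧ f x - vW t f x ≠ 0) ∨ (∃ x, ψ x = q ∧ vW t f x ≠ 0) := by
  by_contra hc
  push_neg at hc
  apply h
  unfold hcore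
  rw [Finset.sum_eq_zero fun x _ => ?_, Finset.sum_eq_zero fun x _ => ?_, add_zero]
  · split
    · next he => exact hc.2 x he
    · rfl
  · split
    · next he => exact hc.1 x he
    · rfl

/-- The key ordering: "not yet moved" mass sits below "already moved" mass. -/
lemma uv_le {t : ℝ} {f : P → ℝ} (hf : ∀ y, 0 ≤ f y)
    (hchain : IsChain (· ≤ ·) {x | f x ≠ 0}) {x y : P}
    (hu : f x - vW t f x ≠ 0) (hv : vW t f y ≠ 0) : x ≤ y := by
  obtain ⟨hfx, htx⟩ := uW_ne_zero hf hu
  obtain ⟨hfy, hty⟩ := vW_ne_zero hf hv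
  rcases eq_or_ne x y with rfl | hne
  · exact le_rfl
  rcases hchain hfx hfy hne with hle | hle
  · exact hle
  · have hlt : y < x := lt_of_le_of_ne hle (Ne.symm hne)
    have := tailw_add_le_tailw hf hlt
    linarith

lemma hcore_chain {φ ψ : P → Q} (hφ : Monotone φ) (hψ : Monotone ψ)
    (hle : ∀ x, φ x ≤ ψ x) {t : ℝ} {f : P → ℝ} (hf : ∀ y, 0 ≤ f y)
    (hchain : IsChain (· ≤ ·) {x | f x ≠ 0}) :
    IsChain (· ≤ ·) {q | hcore φ ψ t f q ≠ 0} := by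
  intro q1 h1 q2 h2 hne
  have comp : ∀ {a b : P}, f a ≠ 0 → f b ≠ 0 → a ≤ b ∨ b ≤ a := by
    intro a b ha hb
    rcases eq_or_ne a b with rfl | hab
    · exact Or.inl le_rfl
    · exact hchain ha hb hab
  rcases hcore_supp h1 with ⟨x1, hx1, hu1⟩ | ⟨x1, hx1, hv1⟩ <;>
    rcases hcore_supp h2 with ⟨x2, hx2, hu2⟩ | ⟨x2, hx2, hv2⟩
  · rcases comp (uW_ne_zero hf hu1).1 (uW_ne_zero hf hu2).1 with hle' | hle'
    · exact Or.inl (hx1 ▸ hx2 ▸ hφ hle')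
    · exact Or.inr (hx2 ▸ hx1 ▸ hφ hle')
  · exact Or.inl (hx1 ▸ hx2 ▸ le_trans (hφ (uv_le hf hchain hu1 hv2)) (hle x2))
  · exact Or.inr (hx2 ▸ hx1 ▸ le_trans (hφ (uv_le hf hchain hu2 hv1)) (hle x1))
  · rcases comp (vW_ne_zero hf hv1).1 (vW_ne_zero hf hv2).1 with hle' | hle'
    · exact Or.inl (hx1 ▸ hx2 ▸ hψ hle')
    · exact Or.inr (hx2 ▸ hx1 ▸ hψ hle')

/-- The prism homotopy as a family of maps of order complexes. -/
noncomputable def hOC (φ ψ : P → Q) (hφ : Monotone φ) (hψ : Monotone ψ)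
    (hle : ∀ x, φ x ≤ ψ x) (t : ℝ) (f : OC P) : OC Q :=
  ⟨hcore φ ψ t f.1, hcore_nonneg f.2.1, by rw [hcore_sum, f.2.2.1],
    hcore_chain hφ hψ hle f.2.1 f.2.2.2⟩

lemma hOC_zero {φ ψ : P → Q} {hφ : Monotone φ} {hψ : Monotone ψ}
    {hle : ∀ x, φ x ≤ ψ x} (f : OC P) : hOC φ ψ hφ hψ hle 0 f = pushOC φ hφ f := by
  refine Subtype.ext (funext fun q => ?_)
  show hcore φ ψ 0 f.1 q = pushf φ f.1 q
  unfold hcore pushf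
  have e2 : (∑ x, if ψ x = q then vW 0 f.1 x else 0) = 0 :=
    Finset.sum_eq_zero fun x _ => by rw [vW_zero f.2.1]; exact ite_self 0
  rw [e2, add_zero]
  refine Finset.sum_congr rfl fun x _ => ?_
  rw [vW_zero f.2.1, sub_zero]

lemma hOC_one {φ ψ : P → Q} {hφ : Monotone φ} {hψ : Monotone ψ}
    {hle : ∀ x, φ x ≤ ψ x} (f : OC P) : hOC φ ψ hφ hψ hle 1 f = pushOC ψ hψ f := by
  refine Subtype.ext (funext fun q => ?_)
  show hcore φ ψ 1 f.1 q = pushf ψ f.1 q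
  unfold hcore pushf
  rw [Finset.sum_eq_zero (fun x _ => ?_), zero_add]
  · refine Finset.sum_congr rfl fun x _ => ?_
    rw [vW_one f.2.1 f.2.2.1]
  · rw [vW_one f.2.1 f.2.2.1, sub_self]
    exact ite_self 0

lemma continuous_hOC (φ ψ : P → Q) (hφ : Monotone φ) (hψ : Monotone ψ)
    (hle : ∀ x, φ x ≤ ψ x) :
    Continuous fun p : ℝ × OC P => hOC φ ψ hφ hψ hle p.1 p.2 := by
  refine Continuous.subtype_mk (continuous_pi fun q => ?_) _
  have hcf : ∀ x : P, Continuous fun p : ℝ × OC P => (p.2 : OC P).1 x :=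
    fun x => (continuous_apply x).comp (continuous_subtype_val.comp continuous_snd)
  have hct : ∀ x : P, Continuous fun p : ℝ × OC P => tailw (p.2).1 x := by
    intro x
    refine continuous_finset_sum _ fun y _ => ?_
    by_cases h : y ≤ x
    · simp only [h, if_true]
      exact continuous_const
    · simp only [h, if_false]
      exact hcf y
  have hcv : ∀ x : P, Continuous fun p : ℝ × OC P => vW p.1 (p.2).1 x := by
    intro x
    exact Continuous.min (hcf x)
      (Continuous.max continuous_const (Continuous.sub continuous_fst (hct x)))
  apply Continuous.add
  · refine continuous_finset_sum _ fun x _ => ?_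
    by_cases h : φ x = q
    · simp only [h, if_true]
      exact Continuous.sub (hcf x) (hcv x)
    · simp only [h, if_false]
      exact continuous_const
  · refine continuous_finset_sum _ fun x _ => ?_
    by_cases h : ψ x = q
    · simp only [h, if_true]
      exact hcv x
    · simp only [h, if_false]
      exact continuous_const

/-- Value of `hcore` at a point whose preimage under both maps is a single point. -/
lemma hcore_single {φ ψ : P → Q} {t : ℝ} {f : P → ℝ} {q : Q} {p : P}
    (h1 : ∀ x, φ x = q ↔ x = p) (h2 : ∀ x, ψ x = q ↔ x = p) :
    hcore φ ψ t f q = f p := by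
  unfold hcore
  have e1 : (∑ x, if φ x = q then f x - vW t f x else 0) = f p - vW t f p := by
    rw [Finset.sum_congr rfl fun x _ => if_congr (h1 x) rfl rfl]
    simp [Finset.sum_ite_eq']
  have e2 : (∑ x, if ψ x = q then vW t f x else 0) = vW t f p := by
    rw [Finset.sum_congr rfl fun x _ => if_congr (h2 x) rfl rfl]
    simp [Finset.sum_ite_eq']
  rw [e1, e2]
  ring

lemma hcore_le {φ ψ : P → Q} {t : ℝ} {f : P → ℝ} (hf : ∀ y, 0 ≤ f y) {q : Q} {p : P}
    (h1 : ∀ x, φ x ≠ q) (h2 : ∀ x, ψ x = q ↔ x = p) :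
    hcore φ ψ t f q ≤ f p := by
  unfold hcore
  have e1 : (∑ x, if φ x = q then f x - vW t f x else 0) = 0 :=
    Finset.sum_eq_zero fun x _ => by simp [h1 x]
  have e2 : (∑ x, if ψ x = q then vW t f x else 0) = vW t f p := by
    rw [Finset.sum_congr rfl fun x _ => if_congr (h2 x) rfl rfl]
    simp [Finset.sum_ite_eq']
  rw [e1, e2, zero_add]
  exact vW_le p

end Aux

section Quo

variable {P Q R : Type} [PartialOrder P] [Fintype P] [PartialOrder Q] [Fintype Q]
  [PartialOrder R] [Fintype R]
variable (bP tP : P) (bQ tQ : Q) (bR tR : R)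

/-- Inclusion of the order complex into the collapsed space. -/
noncomputable def mkD : OC P → Dhat P bP tP := fun f => Quot.mk _ (Sum.inl f)

/-- The basepoint of the collapsed space. -/
noncomputable def ptD : Dhat P bP tP := Quot.mk _ (Sum.inr ())

lemma continuous_mkD : Continuous (mkD bP tP) :=
  continuous_quot_mk.comp continuous_inl

lemma mkD_collapse {f : OC P} (h : f.1 bP = 0 ∨ f.1 tP = 0) :
    mkD bP tP f = ptD bP tP :=
  Quot.sound ⟨f, h, rfl, rfl⟩

/-- A continuous map of order complexes respecting the collapsed sets induces a
continuous map of collapsed spaces. -/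
noncomputable def indDC (F : OC P → OC Q) (hc : Continuous F)
    (hF : ∀ f : OC P, (f.1 bP = 0 ∨ f.1 tP = 0) → ((F f).1 bQ = 0 ∨ (F f).1 tQ = 0)) :
    C(Dhat P bP tP, Dhat Q bQ tQ) := by
  refine ⟨Quot.lift (Sum.elim (fun f => mkD bQ tQ (F f)) (fun _ => ptD bQ tQ)) ?_, ?_⟩
  · rintro a b ⟨x, hx, rfl, rfl⟩
    exact mkD_collapse bQ tQ (hF x hx)
  · exact continuous_quot_lift _
      (((continuous_mkD bQ tQ).comp hc).sumElim continuous_const)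

lemma indDC_mk (F : OC P → OC Q) (hc : Continuous F) (hF) (f : OC P) :
    indDC bP tP bQ tQ F hc hF
        (Quot.mk (pcollapseRel (OC P) {f : OC P | f.1 bP = 0 ∨ f.1 tP = 0}) (Sum.inl f))
      = mkD bQ tQ (F f) := rfl

lemma indDC_pt (F : OC P → OC Q) (hc : Continuous F) (hF) (u : Unit) :
    indDC bP tP bQ tQ F hc hF
        (Quot.mk (pcollapseRel (OC P) {f : OC P | f.1 bP = 0 ∨ f.1 tP = 0}) (Sum.inr u))
      = ptD bQ tQ := rfl

lemma indDC_mkD (F : OC P → OC Q) (hc : Continuous F) (hF) (f : OC P) :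
    indDC bP tP bQ tQ F hc hF (mkD bP tP f) = mkD bQ tQ (F f) := rfl

lemma indDC_ptD (F : OC P → OC Q) (hc : Continuous F) (hF) :
    indDC bP tP bQ tQ F hc hF (ptD bP tP) = ptD bQ tQ := rfl

lemma indDC_congr (F G : OC P → OC Q) (h : F = G) (hcF : Continuous F) (hF)
    (hcG : Continuous G) (hG) :
    indDC bP tP bQ tQ F hcF hF = indDC bP tP bQ tQ G hcG hG := by
  subst h
  rfl

lemma indDC_comp (F : OC Q → OC R) (hcF : Continuous F)
    (hF : ∀ f : OC Q, (f.1 bQ = 0 ∨ f.1 tQ = 0) → ((F f).1 bR = 0 ∨ (F f).1 tR = 0))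
    (G : OC P → OC Q) (hcG : Continuous G)
    (hG : ∀ f : OC P, (f.1 bP = 0 ∨ f.1 tP = 0) → ((G f).1 bQ = 0 ∨ (G f).1 tQ = 0)) :
    (indDC bQ tQ bR tR F hcF hF).comp (indDC bP tP bQ tQ G hcG hG)
      = indDC bP tP bR tR (F ∘ G) (hcF.comp hcG) (fun f hf => hF _ (hG f hf)) := by
  refine ContinuousMap.ext fun d => ?_
  induction d using Quot.ind with
  | _ a =>
    cases a with
    | inl f =>
      show mkD bR tR (F (G f)) = mkD bR tR (F (G f))
      rfl
    | inr u =>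
      rfl

lemma indDC_id (h) :
    indDC bP tP bP tP (id : OC P → OC P) continuous_id h = ContinuousMap.id _ := by
  refine ContinuousMap.ext fun d => ?_
  induction d using Quot.ind with
  | _ a =>
    cases a with
    | inl f => rfl
    | inr u => rfl

lemma indDC_const (F : OC P → OC Q) (hc : Continuous F) (hF)
    (hall : ∀ f : OC P, (F f).1 bQ = 0 ∨ (F f).1 tQ = 0) :
    indDC bP tP bQ tQ F hc hF = ContinuousMap.const _ (ptD bQ tQ) := by
  refine ContinuousMap.ext fun d => ?_
  induction d using Quot.ind with
  | _ a =>
    cases a with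
    | inl f => exact mkD_collapse bQ tQ (hall f)
    | inr u => rfl

/-- The prism homotopy descends to the collapsed spaces. -/
lemma homotopic_hOC (φ ψ : P → Q) (hφ : Monotone φ) (hψ : Monotone ψ)
    (hle : ∀ x, φ x ≤ ψ x)
    (hdes : ∀ (t : ℝ) (f : OC P), (f.1 bP = 0 ∨ f.1 tP = 0) →
      ((hOC φ ψ hφ hψ hle t f).1 bQ = 0 ∨ (hOC φ ψ hφ hψ hle t f).1 tQ = 0))
    (hF0) (hF1) :
    (indDC bP tP bQ tQ (pushOC φ hφ) (continuous_pushOC φ hφ) hF0).Homotopic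
      (indDC bP tP bQ tQ (pushOC ψ hψ) (continuous_pushOC ψ hψ) hF1) := by
  let K : C(OC P × unitInterval, Dhat Q bQ tQ) :=
    ⟨fun p => mkD bQ tQ (hOC φ ψ hφ hψ hle (p.2 : ℝ) p.1), by
      refine (continuous_mkD bQ tQ).comp ?_
      exact (continuous_hOC φ ψ hφ hψ hle).comp
        ((continuous_subtype_val.comp continuous_snd).prodMk continuous_fst)⟩
  let Kc : C(OC P, C(unitInterval, Dhat Q bQ tQ)) := K.curry
  let g : (OC P ⊕ Unit) → C(unitInterval, Dhat Q bQ tQ) :=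
    Sum.elim (fun f => Kc f) (fun _ => ContinuousMap.const unitInterval (ptD bQ tQ))
  have hlift : ∀ a b, pcollapseRel (OC P) {f : OC P | f.1 bP = 0 ∨ f.1 tP = 0} a b →
      g a = g b := by
    rintro a b ⟨x, hx, rfl, rfl⟩
    refine ContinuousMap.ext fun t => ?_
    exact mkD_collapse bQ tQ (hdes (t : ℝ) x hx)
  let L : C(Dhat P bP tP, C(unitInterval, Dhat Q bQ tQ)) :=
    ⟨Quot.lift g hlift, continuous_quot_lift _ (Kc.continuous.sumElim continuous_const)⟩
  let M : C(unitInterval × Dhat P bP tP, Dhat Q bQ tQ) :=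
    L.uncurry.comp ⟨Prod.swap, continuous_swap⟩
  have hM : ∀ (t : unitInterval) (d : Dhat P bP tP), M (t, d) = L d t := fun t d => rfl
  have hL1 : ∀ f : OC P,
      L (Quot.mk (pcollapseRel (OC P) {f : OC P | f.1 bP = 0 ∨ f.1 tP = 0}) (Sum.inl f))
        = Kc f := fun f => rfl
  have hL2 : ∀ u : Unit,
      L (Quot.mk (pcollapseRel (OC P) {f : OC P | f.1 bP = 0 ∨ f.1 tP = 0}) (Sum.inr u))
        = ContinuousMap.const unitInterval (ptD bQ tQ) := fun u => rfl
  have hKc : ∀ (f : OC P) (t : unitInterval),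
      Kc f t = mkD bQ tQ (hOC φ ψ hφ hψ hle (t : ℝ) f) := fun f t => rfl
  refine ⟨⟨M, ?_, ?_⟩⟩
  · intro d
    induction d using Quot.ind with
    | _ a =>
      cases a with
      | inl f =>
        show M (0, _) = _
        erw [hM, hL1, hKc, indDC_mk]
        rw [show ((0 : unitInterval) : ℝ) = 0 from rfl]
        exact congrArg _ (hOC_zero f)
      | inr u =>
        show M (0, _) = _
        rfl
  · intro d
    induction d using Quot.ind with
    | _ a =>
      cases a with
      | inl f =>
        show M (1, _) = _
        erw [hM, hL1, hKc, indDC_mk]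
        rw [show ((1 : unitInterval) : ℝ) = 1 from rfl]
        exact congrArg _ (hOC_one f)
      | inr u =>
        show M (1, _) = _
        rfl

end Quo

section LatticePart

variable {L : Type} [Lattice L] [Fintype L] [BoundedOrder L]

/-- The join of all atoms below `x`. -/
noncomputable def cjoin (x : L) : L :=
  (Finset.univ.filter fun a => IsAtom a ∧ a ≤ x).sup id

lemma cjoin_le (x : L) : cjoin x ≤ x :=
  Finset.sup_le fun a ha => ((Finset.mem_filter.mp ha).2).2

lemma cjoin_mono : Monotone (cjoin (L := L)) := by
  intro x y hxy
  refine Finset.sup_mono ?_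
  intro a ha
  rw [Finset.mem_filter] at ha ⊢
  exact ⟨ha.1, ha.2.1, ha.2.2.trans hxy⟩

lemma cjoin_mem (x : L) : cjoin x ∈ joinsOfAtoms L :=
  ⟨_, fun a ha => (Finset.mem_filter.mp ha).2.1, rfl⟩

lemma cjoin_of_mem {x : L} (h : x ∈ joinsOfAtoms L) : cjoin x = x := by
  obtain ⟨s, hs, rfl⟩ := h
  refine le_antisymm (cjoin_le _) (Finset.sup_le fun a ha => ?_)
  have hm : a ∈ Finset.univ.filter fun b => IsAtom b ∧ b ≤ s.sup id :=
    Finset.mem_filter.mpr ⟨Finset.mem_univ a, hs a ha, Finset.le_sup (f := id) ha⟩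
  exact Finset.le_sup (f := id) hm

lemma exists_atom_le {x : L} (h : x ≠ ⊥) : ∃ a, IsAtom a ∧ a ≤ x := by
  rcases eq_bot_or_exists_atom_le x with h' | h'
  · exact absurd h' h
  · exact h'

lemma cjoin_eq_bot {x : L} (h : cjoin x = ⊥) : x = ⊥ := by
  by_contra hx
  obtain ⟨a, ha, hax⟩ := exists_atom_le hx
  have hle : a ≤ cjoin x :=
    Finset.le_sup (f := id) (Finset.mem_filter.mpr ⟨Finset.mem_univ a, ha, hax⟩)
  rw [h, le_bot_iff] at hle
  exact ha.1 hle

lemma cjoin_eq_top {x : L} (h : cjoin x = ⊤) : x = ⊤ :=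
  top_unique (h ▸ cjoin_le x)

lemma cjoin_bot_iff : ∀ x : L, cjoin x = ⊥ ↔ x = ⊥ := fun x =>
  ⟨cjoin_eq_bot, fun h => by
    subst h
    exact le_bot_iff.mp (cjoin_le ⊥)⟩

end LatticePart

section Main

variable {L : Type} [Lattice L] [Fintype L] [BoundedOrder L]

lemma part_one (htop : (⊤ : L) ∉ joinsOfAtoms L) : ContractibleSpace (Dhat L ⊥ ⊤) := by
  have hct : ∀ x : L, cjoin x ≠ ⊤ := by
    intro x hx
    exact htop (hx ▸ cjoin_mem x)
  have hdes : ∀ (t : ℝ) (f : OC L), (f.1 ⊥ = 0 ∨ f.1 ⊤ = 0) →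
      ((hOC cjoin id cjoin_mono monotone_id cjoin_le t f).1 ⊥ = 0 ∨
        (hOC cjoin id cjoin_mono monotone_id cjoin_le t f).1 ⊤ = 0) := by
    intro t f hf
    rcases hf with hf | hf
    · left
      show hcore cjoin id t f.1 ⊥ = 0
      exact (hcore_single (φ := cjoin) (ψ := id) cjoin_bot_iff fun x => Iff.rfl).trans hf
    · right
      show hcore cjoin id t f.1 ⊤ = 0
      refine le_antisymm ?_ (hcore_nonneg f.2.1 ⊤)
      calc hcore cjoin id t f.1 ⊤ ≤ f.1 ⊤ := hcore_le f.2.1 hct fun x => Iff.rfl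
        _ = 0 := hf
  have hF0 : ∀ f : OC L, (f.1 ⊥ = 0 ∨ f.1 ⊤ = 0) →
      ((pushOC cjoin cjoin_mono f).1 ⊥ = 0 ∨ (pushOC cjoin cjoin_mono f).1 ⊤ = 0) :=
    fun f _ => Or.inr (pushf_eq_zero hct)
  have hF1 : ∀ f : OC L, (f.1 ⊥ = 0 ∨ f.1 ⊤ = 0) →
      ((pushOC id monotone_id f).1 ⊥ = 0 ∨ (pushOC id monotone_id f).1 ⊤ = 0) := by
    intro f hf
    rcases hf with hf | hf
    · left
      show pushf id f.1 ⊥ = 0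
      exact (pushf_eq_single (φ := id) fun x => Iff.rfl).trans hf
    · right
      show pushf id f.1 ⊤ = 0
      exact (pushf_eq_single (φ := id) fun x => Iff.rfl).trans hf
  have hhom := homotopic_hOC ⊥ ⊤ ⊥ ⊤ cjoin id cjoin_mono monotone_id cjoin_le hdes hF0 hF1
  rw [indDC_const _ _ _ _ (pushOC cjoin cjoin_mono) (continuous_pushOC cjoin cjoin_mono) hF0
      (fun f => Or.inr (pushf_eq_zero hct))] at hhom
  rw [indDC_congr _ _ _ _ (pushOC id monotone_id) id pushOC_id (continuous_pushOC id monotone_id)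
      hF1 continuous_id (fun f hf => hf), indDC_id] at hhom
  rw [contractible_iff_id_nullhomotopic]
  exact ⟨ptD ⊥ ⊤, hhom.symm⟩

lemma bot_mem_joins : (⊥ : L) ∈ joinsOfAtoms L :=
  ⟨∅, fun a ha => absurd ha (Finset.notMem_empty a), by simp⟩

lemma part_two (h : (⊤ : L) ∈ joinsOfAtoms L) :
    Nonempty (ContinuousMap.HomotopyEquiv (Dhat L ⊥ ⊤)
      (Dhat {x : L // x ∈ joinsOfAtoms L} ⟨⊥, bot_mem_joins⟩ ⟨⊤, h⟩)) := by
  let bJ : {x : L // x ∈ joinsOfAtoms L} := ⟨⊥, bot_mem_joins⟩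
  let tJ : {x : L // x ∈ joinsOfAtoms L} := ⟨⊤, h⟩
  let r : L → {x : L // x ∈ joinsOfAtoms L} := fun x => ⟨cjoin x, cjoin_mem x⟩
  have hr : Monotone r := fun x y hxy => Subtype.mk_le_mk.mpr (cjoin_mono hxy)
  let i : {x : L // x ∈ joinsOfAtoms L} → L := Subtype.val
  have hi : Monotone i := fun x y hxy => hxy
  have hctop : cjoin (⊤ : L) = ⊤ := cjoin_of_mem h
  have htiff : ∀ x : L, cjoin x = ⊤ ↔ x = ⊤ := fun x =>
    ⟨cjoin_eq_top, fun hx => by rw [hx, hctop]⟩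
  have hrb : ∀ x, r x = bJ ↔ x = ⊥ := fun x => by
    rw [Subtype.ext_iff]
    exact cjoin_bot_iff x
  have hrt : ∀ x, r x = tJ ↔ x = ⊤ := fun x => by
    rw [Subtype.ext_iff]
    exact htiff x
  have hib : ∀ x, i x = ⊥ ↔ x = bJ := fun x =>
    ⟨fun hx => Subtype.ext hx, fun hx => by rw [hx]⟩
  have hit : ∀ x, i x = ⊤ ↔ x = tJ := fun x =>
    ⟨fun hx => Subtype.ext hx, fun hx => by rw [hx]⟩
  have hFr : ∀ f : OC L, (f.1 ⊥ = 0 ∨ f.1 ⊤ = 0) →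
      ((pushOC r hr f).1 bJ = 0 ∨ (pushOC r hr f).1 tJ = 0) := by
    intro f hf
    rcases hf with hf | hf
    · exact Or.inl ((pushf_eq_single hrb).trans hf)
    · exact Or.inr ((pushf_eq_single hrt).trans hf)
  have hFi : ∀ f : OC {x : L // x ∈ joinsOfAtoms L}, (f.1 bJ = 0 ∨ f.1 tJ = 0) →
      ((pushOC i hi f).1 ⊥ = 0 ∨ (pushOC i hi f).1 ⊤ = 0) := by
    intro f hf
    rcases hf with hf | hf
    · exact Or.inl ((pushf_eq_single hib).trans hf)
    · exact Or.inr ((pushf_eq_single hit).trans hf)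
  let rD := indDC ⊥ ⊤ bJ tJ (pushOC r hr) (continuous_pushOC r hr) hFr
  let iD := indDC bJ tJ ⊥ ⊤ (pushOC i hi) (continuous_pushOC i hi) hFi
  have hdes2 : ∀ (t : ℝ) (f : OC L), (f.1 ⊥ = 0 ∨ f.1 ⊤ = 0) →
      ((hOC cjoin id cjoin_mono monotone_id cjoin_le t f).1 ⊥ = 0 ∨
        (hOC cjoin id cjoin_mono monotone_id cjoin_le t f).1 ⊤ = 0) := by
    intro t f hf
    rcases hf with hf | hf
    · exact Or.inl
        ((hcore_single (φ := cjoin) (ψ := id) cjoin_bot_iff fun x => Iff.rfl).trans hf)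
    · exact Or.inr
        ((hcore_single (φ := cjoin) (ψ := id) htiff fun x => Iff.rfl).trans hf)
  have hF0' : ∀ f : OC L, (f.1 ⊥ = 0 ∨ f.1 ⊤ = 0) →
      ((pushOC cjoin cjoin_mono f).1 ⊥ = 0 ∨ (pushOC cjoin cjoin_mono f).1 ⊤ = 0) := by
    intro f hf
    rcases hf with hf | hf
    · exact Or.inl ((pushf_eq_single cjoin_bot_iff).trans hf)
    · exact Or.inr ((pushf_eq_single htiff).trans hf)
  have hF1' : ∀ f : OC L, (f.1 ⊥ = 0 ∨ f.1 ⊤ = 0) →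
      ((pushOC id monotone_id f).1 ⊥ = 0 ∨ (pushOC id monotone_id f).1 ⊤ = 0) := by
    intro f hf
    rcases hf with hf | hf
    · exact Or.inl ((pushf_eq_single (φ := id) fun x => Iff.rfl).trans hf)
    · exact Or.inr ((pushf_eq_single (φ := id) fun x => Iff.rfl).trans hf)
  have hhom := homotopic_hOC ⊥ ⊤ ⊥ ⊤ cjoin id cjoin_mono monotone_id cjoin_le hdes2 hF0' hF1'
  have hir : i ∘ r = cjoin := rfl
  have hri : r ∘ i = id := funext fun x => Subtype.ext (cjoin_of_mem x.2)
  have e2 : indDC ⊥ ⊤ ⊥ ⊤ (pushOC id monotone_id) (continuous_pushOC id monotone_id) hF1'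
      = ContinuousMap.id (Dhat L ⊥ ⊤) := by
    rw [indDC_congr _ _ _ _ (pushOC id monotone_id) id pushOC_id
      (continuous_pushOC id monotone_id) hF1' continuous_id (fun f hf => hf), indDC_id]
  refine ⟨⟨rD, iD, ?_, ?_⟩⟩
  · have e1 : iD.comp rD = indDC ⊥ ⊤ ⊥ ⊤ (pushOC cjoin cjoin_mono)
        (continuous_pushOC cjoin cjoin_mono) hF0' := by
      refine ContinuousMap.ext fun d => ?_
      induction d using Quot.ind with
      | _ a =>
        cases a with
        | inl f =>
          show mkD ⊥ ⊤ (pushOC i hi (pushOC r hr f)) = mkD ⊥ ⊤ (pushOC cjoin cjoin_mono f)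
          exact congrArg _ ((pushOC_comp i hi r hr f).trans
            (congrFun (pushOC_congr hir (hi.comp hr) cjoin_mono) f))
        | inr u =>
          rfl
    rw [e1, ← e2]
    exact hhom
  · have e3 : rD.comp iD = ContinuousMap.id _ := by
      refine ContinuousMap.ext fun d => ?_
      induction d using Quot.ind with
      | _ a =>
        cases a with
        | inl f =>
          show mkD bJ tJ (pushOC r hr (pushOC i hi f)) = mkD bJ tJ f
          show mkD bJ tJ (pushOC r hr (pushOC i hi f)) = mkD bJ tJ f
          exact congrArg _ ((pushOC_comp r hr i hi f).trans
            (congrFun ((pushOC_congr hri (hr.comp hi) monotone_id).trans pushOC_id) f))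
        | inr u =>
          show ptD bJ tJ = ptD bJ tJ
          rfl
    rw [e3]

end Main

/-- Let `P` be a finite lattice and `J_P ⊆ P` the sublattice of all joins of atoms.
If `⊤ ∉ J_P` then `Δ̌̂(P)` is contractible; if `⊤ ∈ J_P` then `Δ̌̂(P)` is homotopy
equivalent to `Δ̌̂(J_P)`. -/
theorem dhat_joins_of_atoms (P : Type) [Lattice P] [Fintype P] [BoundedOrder P] :
    (⊤ ∉ joinsOfAtoms P → ContractibleSpace (Dhat P ⊥ ⊤)) ∧
    (∀ h : ⊤ ∈ joinsOfAtoms P,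
      Nonempty (ContinuousMap.HomotopyEquiv (Dhat P ⊥ ⊤)
        (Dhat {x : P // x ∈ joinsOfAtoms P}
          ⟨⊥, ⟨(∅ : Finset P), by simp, by simp⟩⟩ ⟨⊤, h⟩))) := by
  constructor
  · exact part_one
  · intro h
    exact part_two h
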